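/- Let δ > 0 and let a : B′_δ(0) ⊂ ℝ^{N−1} → ℝ be a C¹ function with a(0) = 0 and ∇a(0) = 0 which is not identically zero on B′_δ(0). Let (p_n) be a sequence in ℝ^N such that for some constant C, |p_n · (x′, a(x′))| ≤ C for all n and all x′ ∈ B′_δ(0). Then the sequence (p_n) is bounded. -/

import Mathlib

open scoped RealInnerProductSpace
open Metric

noncomputable section

/-- `ℝ^N` as a Euclidean space. -/
abbrev Euc (N : ℕ) := EuclideanSpace ℝ (Fin N)

/-- real `N × N` matrices. -/
abbrev MatN (N : ℕ) := Matrix (Fin N) (Fin N) ℝ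

variable {N : ℕ}

/-- Pucci maximal operator `M⁺(M) = λ tr(M⁻) + Λ tr(M⁺)`, written in terms of the
eigenvalues of the symmetric matrix `M`. -/
noncomputable def pucciSup (lam Lam : ℝ) (M : MatN N) : ℝ :=
  if h : M.IsHermitian then
    ∑ i, (lam * min (h.eigenvalues i) 0 + Lam * max (h.eigenvalues i) 0)
  else 0

/-- Pucci minimal operator `M⁻(M) = λ tr(M⁺) + Λ tr(M⁻)`. -/
noncomputable def pucciInf (lam Lam : ℝ) (M : MatN N) : ℝ :=
  if h : M.IsHermitian then
    ∑ i, (lam * max (h.eigenvalues i) 0 + Lam * min (h.eigenvalues i) 0)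
  else 0

/-- `F` is uniformly elliptic with ellipticity constants `lam ≤ Lam`:
`M⁻(M) ≤ F(M) ≤ M⁺(M)` for every symmetric `M`. -/
def UniformlyElliptic (lam Lam : ℝ) (F : MatN N → ℝ) : Prop :=
  Continuous F ∧ ∀ M : MatN N, M.IsHermitian →
    pucciInf lam Lam M ≤ F M ∧ F M ≤ pucciSup lam Lam M

/-- Hessian matrix of a real function at a point. -/
noncomputable def hessian (φ : Euc N → ℝ) (x : Euc N) : MatN N :=
  Matrix.of fun i j =>
    iteratedFDeriv ℝ 2 φ x ![EuclideanSpace.single i 1, EuclideanSpace.single j 1]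

/-- Viscosity subsolution of `G(x, ∇u, D²u) = f` on `D`: whenever a `C²` test function
`φ` touches `u` from above (`u - φ` has a local max) at `x₀ ∈ D`, then
`G(x₀, ∇φ(x₀), D²φ(x₀)) ≥ f x₀`. -/
def ViscositySubsolution (D : Set (Euc N)) (G : Euc N → Euc N → MatN N → ℝ)
    (f : Euc N → ℝ) (u : Euc N → ℝ) : Prop :=
  ∀ x₀ ∈ D, ∀ φ : Euc N → ℝ, ContDiffAt ℝ 2 φ x₀ →
    IsLocalMax (fun x => u x - φ x) x₀ → f x₀ ≤ G x₀ (gradient φ x₀) (hessian φ x₀)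

/-- Viscosity supersolution of `G(x, ∇u, D²u) = f` on `D`. -/
def ViscositySupersolution (D : Set (Euc N)) (G : Euc N → Euc N → MatN N → ℝ)
    (f : Euc N → ℝ) (u : Euc N → ℝ) : Prop :=
  ∀ x₀ ∈ D, ∀ φ : Euc N → ℝ, ContDiffAt ℝ 2 φ x₀ →
    IsLocalMin (fun x => u x - φ x) x₀ → G x₀ (gradient φ x₀) (hessian φ x₀) ≤ f x₀

/-- Viscosity solution: both a sub- and a supersolution. -/
def ViscositySolution (D : Set (Euc N)) (G : Euc N → Euc N → MatN N → ℝ)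
    (f : Euc N → ℝ) (u : Euc N → ℝ) : Prop :=
  ViscositySubsolution D G f u ∧ ViscositySupersolution D G f u

/-- The degenerate elliptic operator `(x, p, M) ↦ |p|^α (F(M) + h(x)·p)`. -/
noncomputable def degenOp (α : ℝ) (F : MatN N → ℝ) (h : Euc N → Euc N) :
    Euc N → Euc N → MatN N → ℝ :=
  fun x p M => ‖p‖ ^ α * (F M + ⟪h x, p⟫)

/-- the first `N` coordinates `y'` of a point `y = (y', y_N)` of `ℝ^{N+1}`. -/
noncomputable def projHyp (y : Euc (N + 1)) : Euc N := WithLp.toLp 2 (fun i => y i.castSucc)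

/-- the last coordinate `y_N` of a point `y = (y', y_N)` of `ℝ^{N+1}`. -/
noncomputable def lastCoord (y : Euc (N + 1)) : ℝ := y (Fin.last N)

/-- the point `(x', s) ∈ ℝ^{N+1}`. -/
noncomputable def withLast (x' : Euc N) (s : ℝ) : Euc (N + 1) :=
  WithLp.toLp 2 (Fin.snoc (α := fun _ => ℝ) (WithLp.ofLp x') s)

/-- the last basis vector `e_N` of `ℝ^{N+1}`. -/
noncomputable def eLast (N : ℕ) : Euc (N + 1) := EuclideanSpace.single (Fin.last N) 1

end

lemma inner_withLast {N : ℕ} (x' : Euc N) (s : ℝ) (q : Euc (N+1)) :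
    ⟪withLast x' s, q⟫ = ⟪x', projHyp q⟫ + s * q (Fin.last N) := by
  simp [withLast, projHyp, PiLp.inner_apply, RCLike.inner_apply, conj_trivial,
    Fin.sum_univ_castSucc]
  ring

lemma span_graph_top {N : ℕ} (δ : ℝ) (hδ : 0 < δ)
    (a : Euc N → ℝ) (ha0' : fderiv ℝ a 0 = 0)
    (hane : ∃ x' ∈ ball (0 : Euc N) δ, a x' ≠ 0) :
    Submodule.span ℝ ((fun x' => withLast x' (a x')) '' ball (0 : Euc N) δ) = ⊤ := by
  set s := (fun x' => withLast x' (a x')) '' ball (0 : Euc N) δ with hs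
  rw [← Submodule.orthogonal_eq_bot_iff]
  rw [eq_bot_iff]
  intro q hq
  simp only [Submodule.mem_bot]
  have key : ∀ x' ∈ ball (0 : Euc N) δ,
      ⟪x', projHyp q⟫ + a x' * q (Fin.last N) = 0 := by
    intro x' hx'
    have := (Submodule.mem_orthogonal _ q).1 hq (withLast x' (a x'))
      (Submodule.subset_span ⟨x', hx', rfl⟩)
    rwa [inner_withLast] at this
  set c := q (Fin.last N) with hcdef
  have hc : c = 0 := by
    by_contra hc
    set w : Euc N := (-c⁻¹) • projHyp q with hw
    have haw : Set.EqOn a (fun x => ⟪w, x⟫) (ball (0 : Euc N) δ) := by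
      intro x' hx'
      have h1 := key x' hx'
      simp only [hw, inner_smul_left, conj_trivial]
      rw [real_inner_comm]
      have h2 : ⟪x', projHyp q⟫ = -(a x' * c) := by linarith
      rw [h2]
      field_simp
    have hev : a =ᶠ[nhds (0 : Euc N)] fun x => ⟪w, x⟫ :=
      Filter.eventuallyEq_of_mem (isOpen_ball.mem_nhds (mem_ball_self hδ)) haw
    have hfd : fderiv ℝ a 0 = innerSL ℝ w := by
      rw [hev.fderiv_eq]
      exact (innerSL ℝ w).fderiv
    rw [ha0'] at hfd
    have hww : ⟪w, w⟫ = 0 := by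
      have := congrArg (fun L : Euc N →L[ℝ] ℝ => L w) hfd
      simpa using this.symm
    have hw0 : w = 0 := inner_self_eq_zero.mp hww
    obtain ⟨x', hx', hax'⟩ := hane
    apply hax'
    rw [haw hx', hw0]
    simp
  have hq' : projHyp q = 0 := by
    have hz : ∀ x' ∈ ball (0 : Euc N) δ, ⟪x', projHyp q⟫ = 0 := by
      intro x' hx'
      have := key x' hx'
      rw [hc] at this; linarith
    set t : ℝ := δ / (2 * (‖projHyp q‖ + 1)) with ht
    have hqn : (0:ℝ) ≤ ‖projHyp q‖ := norm_nonneg _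
    have htpos : 0 < t := by positivity
    have hmem : t • projHyp q ∈ ball (0 : Euc N) δ := by
      rw [mem_ball_zero_iff, norm_smul, Real.norm_eq_abs, abs_of_pos htpos, ht]
      rw [div_mul_eq_mul_div, div_lt_iff₀ (by positivity)]
      nlinarith
    have := hz _ hmem
    rw [real_inner_smul_left] at this
    have h2 : ⟪projHyp q, projHyp q⟫ = 0 := by
      rcases mul_eq_zero.mp this with h | h
      · exact absurd h (ne_of_gt htpos)
      · exact h
    exact inner_self_eq_zero.mp h2
  ext i
  induction i using Fin.lastCases with
  | last => simpa using hc
  | cast j => simpa [projHyp] using congrArg (fun v : Euc N => v j) hq'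


/-- Proposition 3.7: if `a` is `C¹` on `B'_δ(0)` with `a(0) = 0`, `∇a(0) = 0`, not
identically zero, and `(p_n)` is a sequence of vectors with
`|p_n · (x', a(x'))| ≤ C` for all `x' ∈ B'_δ(0)`, then `(p_n)` is bounded. -/
theorem bounded_of_pairing_with_graph
    {N : ℕ} (δ : ℝ) (hδ : 0 < δ)
    (a : Euc N → ℝ) (ha : ContDiffOn ℝ 1 a (ball (0 : Euc N) δ))
    (ha0 : a 0 = 0) (ha0' : fderiv ℝ a 0 = 0)
    (hane : ∃ x' ∈ ball (0 : Euc N) δ, a x' ≠ 0)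
    (p : ℕ → Euc (N + 1)) (C : ℝ)
    (hp : ∀ n, ∀ x' ∈ ball (0 : Euc N) δ, |⟪p n, withLast x' (a x')⟫| ≤ C) :
    ∃ R : ℝ, ∀ n, ‖p n‖ ≤ R := by
  have hspan := span_graph_top δ hδ a ha0' hane
  obtain ⟨b, hbs, hbspan, hbli⟩ :=
    exists_linearIndependent ℝ ((fun x' => withLast x' (a x')) '' ball (0 : Euc N) δ)
  rw [hspan] at hbspan
  haveI : Fintype b := hbli.setFinite.fintype
  let B : Module.Basis b ℝ (Euc (N + 1)) :=
    Module.Basis.mk hbli (by rw [Subtype.range_coe]; exact hbspan.ge)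
  have hB : ∀ v : b, B v = (v : Euc (N + 1)) := fun v => Module.Basis.mk_apply _ _ _
  set K : ℝ := ∑ v : b, ‖LinearMap.toContinuousLinearMap (B.coord v)‖ with hK
  have hKnn : 0 ≤ K := Finset.sum_nonneg fun _ _ => norm_nonneg _
  refine ⟨K * max C 0, fun n => ?_⟩
  have hC : ∀ v : b, |⟪(v : Euc (N + 1)), p n⟫| ≤ max C 0 := by
    intro v
    obtain ⟨x', hx', hxv⟩ := hbs v.2
    calc |⟪(v : Euc (N + 1)), p n⟫| = |⟪p n, withLast x' (a x')⟫| := by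
          rw [real_inner_comm, ← hxv]
      _ ≤ C := hp n x' hx'
      _ ≤ max C 0 := le_max_left _ _
  have hmain : ‖p n‖ * ‖p n‖ ≤ K * max C 0 * ‖p n‖ := by
    calc ‖p n‖ * ‖p n‖ = ⟪p n, p n⟫ := (real_inner_self_eq_norm_mul_norm _).symm
      _ = ⟪∑ v : b, B.repr (p n) v • B v, p n⟫ := by rw [B.sum_repr (p n)]
      _ = ∑ v : b, B.repr (p n) v * ⟪(v : Euc (N + 1)), p n⟫ := by
          rw [sum_inner]
          exact Finset.sum_congr rfl fun v _ => by rw [real_inner_smul_left, hB]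
      _ ≤ ∑ v : b, ‖LinearMap.toContinuousLinearMap (B.coord v)‖ * ‖p n‖ * max C 0 := by
          apply Finset.sum_le_sum
          intro v _
          have h1 : |B.repr (p n) v| ≤ ‖LinearMap.toContinuousLinearMap (B.coord v)‖ * ‖p n‖ := by
            have h2 := (LinearMap.toContinuousLinearMap (B.coord v)).le_opNorm (p n)
            simpa [Real.norm_eq_abs, Module.Basis.coord_apply] using h2
          calc B.repr (p n) v * ⟪(v : Euc (N + 1)), p n⟫
              ≤ |B.repr (p n) v * ⟪(v : Euc (N + 1)), p n⟫| := le_abs_self _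
            _ = |B.repr (p n) v| * |⟪(v : Euc (N + 1)), p n⟫| := abs_mul _ _
            _ ≤ ‖LinearMap.toContinuousLinearMap (B.coord v)‖ * ‖p n‖ * max C 0 :=
                mul_le_mul h1 (hC v) (abs_nonneg _) (by positivity)
      _ = K * max C 0 * ‖p n‖ := by
          rw [hK, Finset.sum_mul, Finset.sum_mul]
          exact Finset.sum_congr rfl fun v _ => by ring
  rcases eq_or_lt_of_le (norm_nonneg (p n)) with h0 | h0
  · rw [← h0]
    exact mul_nonneg hKnn (le_max_right _ _)
  · exact (mul_le_mul_iff_left₀ h0).mp hmain
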